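/- Let (x, y, u, v) : I → ℝ⁴ be a solution of the system ẋ = u, ẏ = v, u̇ = (1 − u² − v²) u − x, v̇ = (1 − u² − v²) v − y, such that v(t) x(t) − u(t) y(t) ≠ 0 for all t ∈ I. Then the function L(t) = x(t)² + y(t)² + u(t)² + v(t)² − log( (v(t) x(t) − u(t) y(t))² ) is differentiable on I and satisfies dL/dt = −2 (1 − u(t)² − v(t)²)² ≤ 0 for all t ∈ I. -/

import Mathlib

/-- Along solutions of `ẋ = u, ẏ = v, u̇ = (1-u²-v²)u - x, v̇ = (1-u²-v²)v - y` that stay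
in the region `Ω = {vx ≠ uy}`, the function
`L = x² + y² + u² + v² - log((vx - uy)²)` is differentiable with
`dL/dt = -2(1 - u² - v²)² ≤ 0`. -/
theorem L_monotone (I : Set ℝ) (x y u v : ℝ → ℝ)
    (hx : ∀ t ∈ I, HasDerivAt x (u t) t)
    (hy : ∀ t ∈ I, HasDerivAt y (v t) t)
    (hu : ∀ t ∈ I, HasDerivAt u ((1 - u t ^ 2 - v t ^ 2) * u t - x t) t)
    (hv : ∀ t ∈ I, HasDerivAt v ((1 - u t ^ 2 - v t ^ 2) * v t - y t) t)
    (hW : ∀ t ∈ I, v t * x t - u t * y t ≠ 0) :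
    ∀ t ∈ I,
      HasDerivAt (fun s => x s ^ 2 + y s ^ 2 + u s ^ 2 + v s ^ 2 -
          Real.log ((v s * x s - u s * y s) ^ 2))
        (-2 * (1 - u t ^ 2 - v t ^ 2) ^ 2) t ∧
      -2 * (1 - u t ^ 2 - v t ^ 2) ^ 2 ≤ 0 := by
  intro t ht
  refine ⟨?_, ?_⟩
  · have hxt := hx t ht
    have hyt := hy t ht
    have hut := hu t ht
    have hvt := hv t ht
    have hWt := hW t ht
    set W := v t * x t - u t * y t with hWdef
    -- derivative of W
    have hWd : HasDerivAt (fun s => v s * x s - u s * y s)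
        ((1 - u t ^ 2 - v t ^ 2) * W) t := by
      have := ((hvt.mul hxt).sub (hut.mul hyt))
      refine this.congr_deriv ?_
      simp only [hWdef]; ring
    have hW2 : HasDerivAt (fun s => (v s * x s - u s * y s) ^ 2)
        (2 * W * ((1 - u t ^ 2 - v t ^ 2) * W)) t := by
      have := hWd.pow 2
      refine this.congr_deriv ?_
      simp only [hWdef]; ring
    have hW2ne : W ^ 2 ≠ 0 := pow_ne_zero 2 hWt
    have hlog : HasDerivAt (fun s => Real.log ((v s * x s - u s * y s) ^ 2))
        (2 * W * ((1 - u t ^ 2 - v t ^ 2) * W) / W ^ 2) t := hW2.log hW2ne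
    have hquad : HasDerivAt (fun s => x s ^ 2 + y s ^ 2 + u s ^ 2 + v s ^ 2)
        (2 * x t * u t + 2 * y t * v t +
          2 * u t * ((1 - u t ^ 2 - v t ^ 2) * u t - x t) +
          2 * v t * ((1 - u t ^ 2 - v t ^ 2) * v t - y t)) t := by
      have := (((hxt.pow 2).add (hyt.pow 2)).add (hut.pow 2)).add (hvt.pow 2)
      refine this.congr_deriv ?_
      ring
    have := hquad.sub hlog
    refine this.congr_deriv ?_
    field_simp
    ring
  · nlinarith [sq_nonneg (1 - u t ^ 2 - v t ^ 2)]
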